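/- For n ≥ 2 consider the interaction system with n nodes, each with action space {x,y}, and deterministic historyless self-independent reaction functions f_i defined by: f_i outputs x if the current actions of all n−1 other nodes are x, and outputs y otherwise. This system has exactly two stable states, the all-x profile and the all-y profile, and: (i) for every r with 1 ≤ r < n−1 the system is r-convergent; (ii) the system is not (n−1)-convergent, i.e., there exist an initial profile and an (n−1)-fair schedule under which the dynamics never reaches a stable state and is not eventually constant. -/

import Mathlib

/-- A schedule `σ` is fair if every node is activated infinitely often. -/
def Fair {n : ℕ} (σ : ℕ → Finset (Fin n)) : Prop :=
  ∀ i : Fin n, ∀ N : ℕ, ∃ t, N ≤ t ∧ i ∈ σ t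

/-- A schedule is `r`-fair if every node is activated at least once in every
`r` consecutive time steps. -/
def RFair {n : ℕ} (r : ℕ) (σ : ℕ → Finset (Fin n)) : Prop :=
  ∀ i : Fin n, ∀ t0 : ℕ, ∃ t, t0 ≤ t ∧ t < t0 + r ∧ i ∈ σ t

/-- A (deterministic, historyless) reaction function is self-independent if
it does not depend on node `i`'s own action. -/
def SelfIndependent {n : ℕ} {A : Fin n → Type*} (i : Fin n)
    (g : (∀ j, A j) → A i) : Prop :=
  ∀ a b : ∀ j, A j, (∀ j, j ≠ i → a j = b j) → g a = g b

/-- A stable state is a fixed point of all reaction functions. -/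
def Stable {n : ℕ} {A : Fin n → Type*}
    (g : ∀ i : Fin n, (∀ j, A j) → A i) (a : ∀ j, A j) : Prop :=
  ∀ i, g i a = a i

/-- The `(s0, σ)`-dynamics of a system of deterministic historyless reaction
functions: at each time step, each activated node reacts to the current
profile and the other nodes repeat their previous action. -/
def dynamics {n : ℕ} {A : Fin n → Type*}
    (g : ∀ i : Fin n, (∀ j, A j) → A i) (s0 : ∀ j, A j)
    (σ : ℕ → Finset (Fin n)) : ℕ → ∀ j, A j
  | 0 => s0
  | t + 1 => fun i =>
      if i ∈ σ (t + 1) then g i (dynamics g s0 σ t) else dynamics g s0 σ t i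

/-- A sequence converges if it is eventually constant. -/
def EventuallyConstant {α : Type*} (s : ℕ → α) : Prop :=
  ∃ t0 : ℕ, ∀ t, t0 ≤ t → s t = s t0

/-- The system is convergent if the dynamics converges for every initial
profile and every fair schedule. -/
def Convergent {n : ℕ} {A : Fin n → Type*}
    (g : ∀ i : Fin n, (∀ j, A j) → A i) : Prop :=
  ∀ (s0 : ∀ j, A j) (σ : ℕ → Finset (Fin n)),
    (∀ t, (σ t).Nonempty) → Fair σ → EventuallyConstant (dynamics g s0 σ)

/-- The system is `r`-convergent if the dynamics converges for every initial
profile and every `r`-fair schedule. -/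
def RConvergent {n : ℕ} {A : Fin n → Type*} (r : ℕ)
    (g : ∀ i : Fin n, (∀ j, A j) → A i) : Prop :=
  ∀ (s0 : ∀ j, A j) (σ : ℕ → Finset (Fin n)),
    (∀ t, (σ t).Nonempty) → RFair r σ → EventuallyConstant (dynamics g s0 σ)

/-- The two actions `x` and `y`. -/
inductive XY : Type
  | x : XY
  | y : XY
deriving DecidableEq

/-- The reaction function of the example: node `i` chooses `x` iff the current
actions of all `n-1` other nodes are `x`, and chooses `y` otherwise. -/
def allXReaction (n : ℕ) (i : Fin n) (a : Fin n → XY) : XY :=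
  if ∀ j : Fin n, j ≠ i → a j = XY.x then XY.x else XY.y

lemma fin_exists_ne {n : ℕ} (hn : 2 ≤ n) (k : Fin n) : ∃ i : Fin n, i ≠ k := by
  haveI : Nontrivial (Fin n) := by
    rcases n with _ | _ | n
    · omega
    · omega
    · infer_instance
  exact exists_ne k

lemma xy_eq_y {a : XY} (h : a ≠ XY.x) : a = XY.y := by cases a <;> simp_all

lemma succ_mod_ne {n : ℕ} (hn : 2 ≤ n) (t : ℕ) : (t + 1) % n ≠ t % n := by
  intro h
  have : n ∣ (t + 1) - t := (Nat.modEq_iff_dvd' (Nat.le_succ t)).mp h.symm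
  simp at this
  omega

lemma exists_mod_window (n t0 c : ℕ) (hc : c < n) :
    ∃ t, t0 ≤ t ∧ t < t0 + n ∧ t % n = c := by
  have hn : 0 < n := by omega
  have hrem : t0 % n < n := Nat.mod_lt _ hn
  rcases le_or_gt (t0 % n) c with h | h
  · refine ⟨t0 + (c - t0 % n), Nat.le_add_right _ _, by omega, ?_⟩
    rw [Nat.add_mod, Nat.mod_eq_of_lt (show c - t0 % n < n by omega),
      show t0 % n + (c - t0 % n) = c by omega, Nat.mod_eq_of_lt hc]
  · refine ⟨t0 + (c + n - t0 % n), Nat.le_add_right _ _, by omega, ?_⟩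
    rw [Nat.add_mod, Nat.mod_eq_of_lt (show c + n - t0 % n < n by omega),
      show t0 % n + (c + n - t0 % n) = c + n by omega, Nat.add_mod_right, Nat.mod_eq_of_lt hc]

lemma stable_iff {n : ℕ} (hn : 2 ≤ n) (a : Fin n → XY) :
    Stable (allXReaction n) a ↔ (a = fun _ => XY.x) ∨ (a = fun _ => XY.y) := by
  constructor
  · intro hst
    by_cases hall : ∀ j, a j = XY.x
    · exact Or.inl (funext hall)
    · push_neg at hall
      obtain ⟨k, hk⟩ := hall
      have hky : a k = XY.y := xy_eq_y hk
      right
      have hothers : ∀ i, i ≠ k → a i = XY.y := by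
        intro i hik
        have h := hst i
        simp only [allXReaction] at h
        rw [if_neg] at h
        · exact h.symm
        · intro hc
          exact hk (hc k (fun hh => hik hh.symm))
      funext j
      by_cases hjk : j = k
      · subst hjk; exact hky
      · exact hothers j hjk
  · rintro (rfl | rfl) <;> intro i <;> simp only [allXReaction]
    · rw [if_pos]
      intro j _
      simp
    · rw [if_neg]
      intro hc
      obtain ⟨j, hj⟩ := fin_exists_ne hn i
      exact absurd (hc j hj) (by simp)

/-- Two distinct `y` nodes. -/
def TwoY {n : ℕ} (s : Fin n → XY) : Prop :=
  ∃ j k, j ≠ k ∧ s j = XY.y ∧ s k = XY.y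

lemma conv {n : ℕ} (hn : 2 ≤ n) {r : ℕ} (hr1 : 1 ≤ r) (hrn : r < n - 1)
    (s0 : Fin n → XY) (σ : ℕ → Finset (Fin n)) (hfair : RFair r σ) :
    EventuallyConstant (dynamics (allXReaction n) s0 σ) := by
  set s := dynamics (allXReaction n) s0 σ with hs
  have hstep : ∀ t i, s (t + 1) i
      = if i ∈ σ (t + 1) then allXReaction n i (s t) else s t i := fun t i => rfl
  have stepx : ∀ t, s t = (fun _ => XY.x) → s (t + 1) = (fun _ => XY.x) := by
    intro t h
    funext i
    rw [hstep, h]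
    split_ifs with hi
    · simp [allXReaction]
    · rfl
  have stepy : ∀ t, s t = (fun _ => XY.y) → s (t + 1) = (fun _ => XY.y) := by
    intro t h
    funext i
    rw [hstep, h]
    split_ifs with hi
    · simp only [allXReaction]
      rw [if_neg]
      intro hc
      obtain ⟨j, hj⟩ := fin_exists_ne hn i
      exact absurd (hc j hj) (by simp)
    · rfl
  have absx : ∀ t m, s t = (fun _ => XY.x) → s (t + m) = (fun _ => XY.x) := by
    intro t m h
    induction m with
    | zero => exact h
    | succ m ih => exact stepx _ ih
  have absy : ∀ t m, s t = (fun _ => XY.y) → s (t + m) = (fun _ => XY.y) := by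
    intro t m h
    induction m with
    | zero => exact h
    | succ m ih => exact stepy _ ih
  have gy : ∀ m i, (∃ j, j ≠ i ∧ s m j = XY.y) → i ∈ σ (m + 1) → s (m + 1) i = XY.y := by
    rintro m i ⟨j, hji, hjy⟩ hi
    rw [hstep, if_pos hi]
    simp only [allXReaction]
    rw [if_neg]
    intro hc
    exact absurd (hc j hji) (by rw [hjy]; simp)
  have persist : ∀ m, TwoY (s m) → ∀ i, s m i = XY.y → s (m + 1) i = XY.y := by
    rintro m ⟨j, k, hjk, hjy, hky⟩ i hiy
    by_cases hi : i ∈ σ (m + 1)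
    · apply gy m i ?_ hi
      rcases eq_or_ne j i with rfl | hji
      · exact ⟨k, fun hh => hjk hh.symm, hky⟩
      · exact ⟨j, hji, hjy⟩
    · rw [hstep, if_neg hi]
      exact hiy
  have Pstep : ∀ m, TwoY (s m) → TwoY (s (m + 1)) := by
    intro m hP
    obtain ⟨j, k, hjk, hjy, hky⟩ := hP
    exact ⟨j, k, hjk, persist m ⟨j, k, hjk, hjy, hky⟩ j hjy,
      persist m ⟨j, k, hjk, hjy, hky⟩ k hky⟩
  have Pall : ∀ t m, TwoY (s t) → TwoY (s (t + m)) := by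
    intro t m h
    induction m with
    | zero => exact h
    | succ m ih => exact Pstep _ ih
  have Plem : ∀ t, TwoY (s t) → s (t + r) = (fun _ => XY.y) := by
    intro t hP
    funext i
    obtain ⟨τ, hτ1, hτ2, hτi⟩ := hfair i (t + 1)
    obtain ⟨m, rfl⟩ : ∃ m, τ = m + 1 := ⟨τ - 1, by omega⟩
    have hPm : TwoY (s m) := by
      have := Pall t (m - t) hP
      rwa [show t + (m - t) = m by omega] at this
    have hy : s (m + 1) i = XY.y := by
      apply gy m i ?_ hτi
      obtain ⟨j, k, hjk, hjy, hky⟩ := hPm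
      rcases eq_or_ne j i with rfl | hji
      · exact ⟨k, fun hh => hjk hh.symm, hky⟩
      · exact ⟨j, hji, hjy⟩
    have prop : ∀ d, s (m + 1 + d) i = XY.y := by
      intro d
      induction d with
      | zero => exact hy
      | succ d ih =>
        have hP' : TwoY (s (m + 1 + d)) := by
          have := Pall t (m + 1 + d - t) hP
          rwa [show t + (m + 1 + d - t) = m + 1 + d by omega] at this
        exact persist _ hP' i ih
    have := prop (t + r - (m + 1))
    rwa [show m + 1 + (t + r - (m + 1)) = t + r by omega] at this
  suffices hkey : ∃ T, s T = (fun _ => XY.x) ∨ s T = (fun _ => XY.y) by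
    obtain ⟨T, hT⟩ := hkey
    refine ⟨T, fun t ht => ?_⟩
    obtain ⟨m, rfl⟩ : ∃ m, t = T + m := ⟨t - T, by omega⟩
    rcases hT with h | h
    · rw [absx T m h, h]
    · rw [absy T m h, h]
  by_contra hcon
  push_neg at hcon
  have huniq : ∀ t, ∃ k, s t k = XY.y ∧ ∀ j, s t j = XY.y → j = k := by
    intro t
    have hex : ∃ k, s t k = XY.y := by
      by_contra hno
      push_neg at hno
      apply (hcon t).1
      funext j
      cases h : s t j with
      | x => rfl
      | y => exact absurd h (hno j)
    obtain ⟨k, hk⟩ := hex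
    refine ⟨k, hk, fun j hj => ?_⟩
    by_contra hne
    exact (hcon (t + r)).2 (Plem t ⟨j, k, hne, hj, hk⟩)
  choose kk hky hkuniq using huniq
  have hsub : ∀ t i, i ∈ σ (t + 1) → i = kk t ∨ i = kk (t + 1) := by
    intro t i hi
    rcases eq_or_ne i (kk t) with h | h
    · exact Or.inl h
    · exact Or.inr (hkuniq (t + 1) i (gy t i ⟨kk t, fun hh => h hh.symm, hky t⟩ hi))
  obtain ⟨i, hiT⟩ : ∃ i : Fin n, i ∉ Finset.image kk (Finset.range (r + 1)) := by
    by_contra hall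
    push_neg at hall
    have h1 : (Finset.univ : Finset (Fin n)) ⊆ Finset.image kk (Finset.range (r + 1)) :=
      fun i _ => hall i
    have h2 := Finset.card_le_card h1
    have h3 := Finset.card_image_le (f := kk) (s := Finset.range (r + 1))
    rw [Finset.card_range] at h3
    simp only [Finset.card_univ, Fintype.card_fin] at h2
    omega
  obtain ⟨t, ht1, ht2, hti⟩ := hfair i 1
  obtain ⟨m, rfl⟩ : ∃ m, t = m + 1 := ⟨t - 1, by omega⟩
  rcases hsub m i hti with h | h
  · exact hiT (Finset.mem_image.mpr ⟨m, Finset.mem_range.mpr (by omega), h.symm⟩)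
  · exact hiT (Finset.mem_image.mpr ⟨m + 1, Finset.mem_range.mpr (by omega), h.symm⟩)

lemma part3 {n : ℕ} (hn : 2 ≤ n) :
    ∃ (s0 : Fin n → XY) (σ : ℕ → Finset (Fin n)),
      (∀ t, (σ t).Nonempty) ∧ RFair (n - 1) σ ∧
      (∀ t : ℕ, ¬ Stable (allXReaction n) (dynamics (allXReaction n) s0 σ t)) ∧
      ¬ EventuallyConstant (dynamics (allXReaction n) s0 σ) := by
  have hn0 : 0 < n := by omega
  set σ : ℕ → Finset (Fin n) :=
    fun t => {⟨t % n, Nat.mod_lt _ hn0⟩, ⟨(t + (n - 1)) % n, Nat.mod_lt _ hn0⟩} with hσ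
  set s0 : Fin n → XY := fun j => if (j : ℕ) = 0 then XY.y else XY.x with hs0
  have hmemσ : ∀ (t : ℕ) (j : Fin n),
      j ∈ σ t ↔ ((j : ℕ) = t % n ∨ (j : ℕ) = (t + (n - 1)) % n) := by
    intro t j
    simp [hσ, Fin.ext_iff]
  have inv : ∀ (t : ℕ) (j : Fin n), dynamics (allXReaction n) s0 σ t j =
      if (j : ℕ) = t % n then XY.y else XY.x := by
    intro t
    induction t with
    | zero =>
      intro j
      show s0 j = _
      rw [hs0]
      by_cases h : (j : ℕ) = 0 <;> simp [h]
    | succ t ih =>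
      intro j
      have h2 : (t + 1 + (n - 1)) % n = t % n := by
        rw [show t + 1 + (n - 1) = t + n by omega, Nat.add_mod_right]
      have hne : (t + 1) % n ≠ t % n := succ_mod_ne hn t
      have hstep : dynamics (allXReaction n) s0 σ (t + 1) j =
          if j ∈ σ (t + 1) then allXReaction n j (dynamics (allXReaction n) s0 σ t)
          else dynamics (allXReaction n) s0 σ t j := rfl
      rw [hstep]
      by_cases hj : j ∈ σ (t + 1)
      · rw [if_pos hj]
        rcases (hmemσ (t + 1) j).mp hj with hcase | hcase
        · -- j = idx (t+1) : becomes y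
          rw [if_pos hcase]
          simp only [allXReaction]
          rw [if_neg]
          intro hc
          have hwit : (⟨t % n, Nat.mod_lt _ hn0⟩ : Fin n) ≠ j := by
            intro hh
            apply hne
            have hv := congrArg Fin.val hh
            simp at hv
            rw [← hcase, ← hv]
          have hx := hc _ hwit
          rw [ih] at hx
          simp at hx
        · -- j = idx t : becomes x
          rw [h2] at hcase
          rw [if_neg (fun h => hne (h.symm.trans hcase))]
          simp only [allXReaction]
          rw [if_pos]
          intro k hk
          rw [ih]
          exact if_neg (fun hkk => hk (Fin.ext (hkk.trans hcase.symm)))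
      · rw [if_neg hj, ih j]
        have hj' := hj
        rw [hmemσ] at hj'
        push_neg at hj'
        rw [h2] at hj'
        rw [if_neg hj'.2, if_neg hj'.1]
  refine ⟨s0, σ, ?_, ?_, ?_, ?_⟩
  · intro t
    exact ⟨_, Finset.mem_insert_self _ _⟩
  · intro i t0
    obtain ⟨t, ht1, ht2, ht3⟩ := exists_mod_window n t0 (i : ℕ) i.isLt
    by_cases hcase : t < t0 + (n - 1)
    · refine ⟨t, ht1, hcase, ?_⟩
      rw [hmemσ]
      exact Or.inl ht3.symm
    · have ht' : t = t0 + (n - 1) := by omega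
      refine ⟨t0, le_refl _, by omega, ?_⟩
      rw [hmemσ]
      right
      rw [← ht', ht3]
  · intro t hst
    have h1 := inv t ⟨t % n, Nat.mod_lt _ hn0⟩
    have h2 := inv t ⟨(t + 1) % n, Nat.mod_lt _ hn0⟩
    simp only [if_pos rfl] at h1
    rw [if_neg (succ_mod_ne hn t)] at h2
    rcases (stable_iff hn _).mp hst with h | h
    · rw [h] at h1
      simp at h1
    · rw [h] at h2
      simp at h2
  · rintro ⟨t0, hconst⟩
    have h1 := hconst (t0 + 1) (by omega)
    have h2 := inv (t0 + 1) ⟨(t0 + 1) % n, Nat.mod_lt _ hn0⟩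
    have h3 := inv t0 ⟨(t0 + 1) % n, Nat.mod_lt _ hn0⟩
    rw [h1] at h2
    rw [if_pos rfl] at h2
    rw [if_neg (succ_mod_ne hn t0)] at h3
    rw [h3] at h2
    simp at h2

/-- For `n ≥ 2`, the system `allXReaction` has exactly two
stable states (all-`x` and all-`y`); it is `r`-convergent for every
`1 ≤ r < n - 1`, and it is not `(n-1)`-convergent: some initial profile and
`(n-1)`-fair schedule yield dynamics that never reaches a stable state and is
not eventually constant. -/
theorem allXReaction_r_convergence (n : ℕ) (hn : 2 ≤ n) :
    (∀ a : Fin n → XY,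
      Stable (allXReaction n) a ↔
        (a = fun _ => XY.x) ∨ (a = fun _ => XY.y)) ∧
    (∀ r : ℕ, 1 ≤ r → r < n - 1 → RConvergent r (allXReaction n)) ∧
    (∃ (s0 : Fin n → XY) (σ : ℕ → Finset (Fin n)),
      (∀ t, (σ t).Nonempty) ∧ RFair (n - 1) σ ∧
      (∀ t : ℕ, ¬ Stable (allXReaction n) (dynamics (allXReaction n) s0 σ t)) ∧
      ¬ EventuallyConstant (dynamics (allXReaction n) s0 σ)) := by
  refine ⟨fun a => stable_iff hn a, ?_, part3 hn⟩
  intro r hr1 hrn s0 σ _ hfair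
  exact conv hn hr1 hrn s0 σ hfair
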